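/- The admissible bilinear form on 'f is unique: if B and B' are two 𝕂-bilinear forms on 'f each satisfying B(1,1) = 1, B(θ_i,θ_j) = δ_{ij}(1-q_i²)^{-1}, B(x, y y') = (B⊗B)(r(x), y⊗y'), and B(x x', y) = (B⊗B)(x⊗x', r(y)), then B = B'. -/

import Mathlib

open scoped TensorProduct

noncomputable section

/-- The ground field `𝕂 = ℚ(q)`. -/
abbrev K : Type := RatFunc ℚ

/-- `q ∈ ℚ(q)`. -/
abbrev qvar : K := RatFunc.X

/-- The free associative algebra `'f` on generators `θ i`, `i ∈ I`. -/
abbrev F (I : Type) : Type := FreeAlgebra K I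

/-- The generators `θ i` of `'f`. -/
def θ {I : Type} (i : I) : F I := FreeAlgebra.ι K i

/-- A Cartan datum: a symmetric integer matrix with positive even diagonal such that
`2(i·j)/(i·i)` is a nonpositive integer for `i ≠ j`. -/
def CartanDatum {I : Type} (c : I → I → ℤ) : Prop :=
  (∀ i j, c i j = c j i) ∧ (∀ i, 0 < c i i ∧ Even (c i i)) ∧
    (∀ i j, i ≠ j → c i j ≤ 0 ∧ c i i ∣ 2 * c i j)

/-- `q_i = q^{(i·i)/2}`. -/
def qi {I : Type} (c : I → I → ℤ) (i : I) : K := qvar ^ (c i i / 2)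

/-- The bilinear extension of `·` to weights: `ν·μ = Σ_{i,j} ν(i) μ(j) (i·j)`. -/
def wtPair {I : Type} (c : I → I → ℤ) (ν μ : I →₀ ℕ) : ℤ :=
  ν.sum fun i a => μ.sum fun j b => (a : ℤ) * (b : ℤ) * c i j

/-- The subspace of `'f` of homogeneous elements of weight `ν ∈ ℕ[I]`: the span of
all words `θ_{i_1} ⋯ θ_{i_r}` whose letters have multiplicities `ν`. -/
def wtSpace {I : Type} [DecidableEq I] (ν : I →₀ ℕ) : Submodule K (F I) :=
  Submodule.span K
    {x | ∃ l : List I, Multiset.toFinsupp (l : Multiset I) = ν ∧ x = (l.map θ).prod}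

/-- The twisted multiplication on `'f ⊗ 'f`:
`(x₁⊗x₂)(y₁⊗y₂) = q^{-|x₂|·|y₁|} (x₁y₁)⊗(x₂y₂)` on homogeneous elements. -/
def IsTwistedMul {I : Type} [DecidableEq I] (c : I → I → ℤ)
    (m : F I ⊗[K] F I →ₗ[K] F I ⊗[K] F I →ₗ[K] F I ⊗[K] F I) : Prop :=
  ∀ (ν μ : I →₀ ℕ) (x₁ x₂ y₁ y₂ : F I), x₂ ∈ wtSpace ν → y₁ ∈ wtSpace μ →
    m (x₁ ⊗ₜ[K] x₂) (y₁ ⊗ₜ[K] y₂) =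
      (qvar ^ (-(wtPair c ν μ))) • ((x₁ * y₁) ⊗ₜ[K] (x₂ * y₂))

/-- `r : 'f → 'f ⊗ 'f` is an algebra homomorphism to the twisted tensor square with
`r(θ_i) = θ_i ⊗ 1 + 1 ⊗ θ_i`. -/
def IsComult {I : Type} (m : F I ⊗[K] F I →ₗ[K] F I ⊗[K] F I →ₗ[K] F I ⊗[K] F I)
    (r : F I →ₗ[K] F I ⊗[K] F I) : Prop :=
  r 1 = (1 : F I) ⊗ₜ[K] (1 : F I) ∧ (∀ x y, r (x * y) = m (r x) (r y)) ∧
    ∀ i, r (θ i) = θ i ⊗ₜ[K] 1 + 1 ⊗ₜ[K] θ i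

/-- The bilinear form `B⊗B` on `'f ⊗ 'f`, `(B⊗B)(x₁⊗x₂, y₁⊗y₂) = B(x₁,y₁)B(x₂,y₂)`. -/
def BB {I : Type} (B : F I →ₗ[K] F I →ₗ[K] K) :
    F I ⊗[K] F I →ₗ[K] F I ⊗[K] F I →ₗ[K] K :=
  LinearMap.BilinForm.tmul B B

/-- Admissibility of a bilinear form on `'f`. -/
def Admissible {I : Type} [DecidableEq I] (c : I → I → ℤ) (r : F I →ₗ[K] F I ⊗[K] F I)
    (B : F I →ₗ[K] F I →ₗ[K] K) : Prop :=
  B 1 1 = 1 ∧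
    (∀ i j, B (θ i) (θ j) = if i = j then (1 - qi c i ^ 2)⁻¹ else 0) ∧
    (∀ x y y', B x (y * y') = BB B (r x) (y ⊗ₜ[K] y')) ∧
    (∀ x x' y, B (x * x') y = BB B (x ⊗ₜ[K] x') (r y))

lemma BB_tmul {I : Type} (B : F I →ₗ[K] F I →ₗ[K] K) (x x' y y' : F I) :
    BB B (x ⊗ₜ[K] x') (y ⊗ₜ[K] y') = B x y * B x' y' := by
  simp [BB, LinearMap.BilinForm.tmul]
  ring

lemma B_one_theta {I : Type} [DecidableEq I] {c : I → I → ℤ}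
    {r : F I →ₗ[K] F I ⊗[K] F I} {B : F I →ₗ[K] F I →ₗ[K] K}
    (hB : Admissible c r B) (hrθ : ∀ i, r (θ i) = θ i ⊗ₜ[K] 1 + 1 ⊗ₜ[K] θ i)
    (j : I) : B 1 (θ j) = 0 := by
  obtain ⟨b11, -, -, bL⟩ := hB
  have h := bL 1 1 (θ j)
  rw [one_mul, hrθ, map_add, BB_tmul, BB_tmul, b11, mul_one, one_mul] at h
  exact left_eq_add.mp h

lemma B_theta_one {I : Type} [DecidableEq I] {c : I → I → ℤ}
    {r : F I →ₗ[K] F I ⊗[K] F I} {B : F I →ₗ[K] F I →ₗ[K] K}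
    (hB : Admissible c r B) (hrθ : ∀ i, r (θ i) = θ i ⊗ₜ[K] 1 + 1 ⊗ₜ[K] θ i)
    (i : I) : B (θ i) 1 = 0 := by
  obtain ⟨b11, -, bR, -⟩ := hB
  have h := bR (θ i) 1 1
  rw [one_mul, hrθ, map_add] at h
  simp only [LinearMap.add_apply, BB_tmul, b11, mul_one, one_mul] at h
  exact left_eq_add.mp h

set_option synthInstance.maxHeartbeats 1000000 in
set_option maxHeartbeats 2000000 in
/-- uniqueness of the admissible bilinear form on 'f. -/
theorem admissible_form_unique {I : Type} [Fintype I] [DecidableEq I]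
    (c : I → I → ℤ) (hc : CartanDatum c)
    (m : F I ⊗[K] F I →ₗ[K] F I ⊗[K] F I →ₗ[K] F I ⊗[K] F I)
    (hm : IsTwistedMul c m)
    (r : F I →ₗ[K] F I ⊗[K] F I) (hr : IsComult m r)
    (B B' : F I →ₗ[K] F I →ₗ[K] K)
    (hB : Admissible c r B) (hB' : Admissible c r B') :
    B = B' := by
  obtain ⟨hr1, hrm, hrθ⟩ := hr
  obtain ⟨b11, bθ, bR, bL⟩ := hB
  obtain ⟨b11', bθ', bR', bL'⟩ := hB'
  -- B and B' agree at 1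
  have hone : ∀ y, B 1 y = B' 1 y := by
    intro y
    induction y using FreeAlgebra.induction with
    | grade0 k =>
        rw [Algebra.algebraMap_eq_smul_one, map_smul, map_smul]
        simp [b11, b11']
    | grade1 j =>
        rw [show FreeAlgebra.ι K j = θ j from rfl,
          B_one_theta ⟨b11, bθ, bR, bL⟩ hrθ, B_one_theta ⟨b11', bθ', bR', bL'⟩ hrθ]
    | mul y y' hy hy' =>
        rw [bR 1 y y', bR' 1 y y', hr1, BB_tmul, BB_tmul, hy, hy']
    | add y y' hy hy' => rw [map_add, map_add, hy, hy']
  -- B and B' agree at θ i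
  have hθ : ∀ i y, B (θ i) y = B' (θ i) y := by
    intro i y
    induction y using FreeAlgebra.induction with
    | grade0 k =>
        rw [Algebra.algebraMap_eq_smul_one, map_smul, map_smul]
        rw [B_theta_one ⟨b11, bθ, bR, bL⟩ hrθ, B_theta_one ⟨b11', bθ', bR', bL'⟩ hrθ]
    | grade1 j =>
        rw [show FreeAlgebra.ι K j = θ j from rfl, bθ, bθ']
    | mul y y' hy hy' =>
        rw [bR (θ i) y y', bR' (θ i) y y', hrθ, map_add, map_add]
        simp only [LinearMap.add_apply, BB_tmul]
        rw [hy, hy', hone y, hone y']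
    | add y y' hy hy' => rw [map_add, map_add, hy, hy']
  -- main induction on x
  ext x y
  induction x using FreeAlgebra.induction generalizing y with
  | grade0 k =>
      rw [Algebra.algebraMap_eq_smul_one, map_smul, map_smul]
      simp [hone y]
  | grade1 i => exact hθ i y
  | mul x x' hx hx' =>
      rw [bL x x' y, bL' x x' y]
      have : BB B (x ⊗ₜ[K] x') = BB B' (x ⊗ₜ[K] x') := by
        apply TensorProduct.ext'
        intro y₁ y₂
        rw [BB_tmul, BB_tmul, hx y₁, hx' y₂]
      rw [this]
  | add x x' hx hx' =>
      simp only [map_add, LinearMap.add_apply, hx y, hx' y]
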